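/- Stationary distribution on an irreducible component: let 0 < α < 1 and let Ω be an irreducible component (an equivalence class of mutual reachability). Define Z_Ω := ∑_{k₁,k₂ ∈ ℕ} (α^{k₂}/(1−α)^{k₁+k₂}) · N_Ω(k₁,k₂) and p(x) := w_α(x)/Z_Ω for x ∈ Ω. Then ∑_{x ∈ Ω} p(x) = 1 and, for every x ∈ Ω, ∑_{x' ∈ Ω} f_α(x',x) · p(x') = p(x); i.e., p is a stationary probability distribution supported on Ω. -/

import Mathlib

/-- The flux function `q(w,x,y,z;b)`. -/
def flux (w x y z b : ℤ) : ℤ :=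
  if w = 1 ∧ x = 1 ∧ y = 1 ∧ z = 0 then b
  else if (w = 0 ∨ w = 1) ∧ x = 0 ∧ y = 1 ∧ z = 0 then 1
  else 0

/-- The stochastic 5-neighbor update `U(v,b)`. -/
def upd (L : ℕ) (v b : ZMod L → ℤ) : ZMod L → ℤ := fun j =>
  v j + flux (v (j - 3)) (v (j - 2)) (v (j - 1)) (v j) (b j)
      - flux (v (j - 2)) (v (j - 1)) (v j) (v (j + 1)) (b (j + 1))

/-- A map `ZMod L → ℤ` is a configuration (resp. bit field) if all its values are 0 or 1. -/
def IsBin (L : ℕ) (x : ZMod L → ℤ) : Prop := ∀ j, x j = 0 ∨ x j = 1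

/-- The number of occurrences of the pattern `w` in the configuration `x`. -/
def patCount (L : ℕ) (x : ZMod L → ℤ) (w : List ℤ) : ℕ :=
  ((Finset.range L).filter fun j =>
    ∀ i < w.length, x ((j + i : ℕ) : ZMod L) = w.getD i 0).card

/-- One step of the Markov chain: `y` is obtained from `x` by some bit field. -/
def step (L : ℕ) (x y : ZMod L → ℤ) : Prop :=
  ∃ b : ZMod L → ℤ, IsBin L b ∧ upd L x b = y

/-- `chain L n x y`: `y` is obtained from `x` by successively applying `n` bit fields. -/
def chain (L : ℕ) : ℕ → (ZMod L → ℤ) → (ZMod L → ℤ) → Prop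
  | 0, x, y => x = y
  | n + 1, x, y => ∃ z, step L x z ∧ chain L n z y

/-- Reachability: some number of steps (possibly zero) maps `x` to `y`. -/
def reach (L : ℕ) (x y : ZMod L → ℤ) : Prop := ∃ n : ℕ, chain L n x y

/-- The finite set of all binary configurations (or bit fields) on `ZMod L`. -/
def cube (L : ℕ) [NeZero L] : Finset (ZMod L → ℤ) :=
  Fintype.piFinset fun _ : ZMod L => ({0, 1} : Finset ℤ)

/-- The one-step transition probability `f_α(x',x)`. -/
noncomputable def transProb (L : ℕ) [NeZero L] (α : ℝ) (x' x : ZMod L → ℤ) : ℝ :=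
  ∑ b ∈ cube L,
    (∏ j : ZMod L, α ^ (b j).toNat * (1 - α) ^ (1 - b j).toNat) *
      (if upd L x' b = x then 1 else 0)

/-- The weight `w_α(y) = α^{#010(y)} / (1-α)^{#1110(y)+#010(y)}`. -/
noncomputable def weight (L : ℕ) (α : ℝ) (y : ZMod L → ℤ) : ℝ :=
  α ^ patCount L y [0, 1, 0] /
    (1 - α) ^ (patCount L y [1, 1, 1, 0] + patCount L y [0, 1, 0])

theorem flux_forced {w x y z b : ℤ} (hw : w = 0 ∨ w = 1) (hx : x = 0) (hy : y = 1) (hz : z = 0) :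
    flux w x y z b = 1 := by rcases hw with h|h <;> simp [flux, hx, hy, hz, h]
theorem flux_block {w x y z b : ℤ} (hw : w = 1) (hx : x = 1) (hy : y = 1) (hz : z = 0) :
    flux w x y z b = b := by simp [flux, hw, hx, hy, hz]
theorem flux_y0 {w x y z b : ℤ} (hy : y = 0) : flux w x y z b = 0 := by
  simp [flux, hy]
theorem flux_z1 {w x y z b : ℤ} (hz : z = 1) : flux w x y z b = 0 := by
  simp [flux, hz]
theorem flux_wx {w x y z b : ℤ} (hw : w = 0) (hx : x = 1) : flux w x y z b = 0 := by
  simp [flux, hw, hx]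
theorem flux_mem {w x y z b : ℤ} (hb : b = 0 ∨ b = 1) :
    flux w x y z b = 0 ∨ flux w x y z b = 1 := by
  unfold flux; split_ifs <;> tauto
theorem flux_ne {w x y z b : ℤ} (h : flux w x y z b ≠ 0) : y = 1 ∧ z = 0 := by
  unfold flux at h; split_ifs at h with h1 h2 <;> tauto

namespace Stat
variable {L : ℕ}

/-- `mov v b j = 1` iff a particle moves from `j-1` to `j`. -/
def mov (v b : ZMod L → ℤ) (j : ZMod L) : ℤ :=
  flux (v (j-3)) (v (j-2)) (v (j-1)) (v j) (b j)

theorem upd_eq_mov (v b : ZMod L → ℤ) (j : ZMod L) :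
    upd L v b j = v j + mov v b j - mov v b (j+1) := by
  have e1 : j + 1 - 3 = j - 2 := by ring
  have e2 : j + 1 - 2 = j - 1 := by ring
  have e3 : j + 1 - 1 = j := by ring
  simp only [upd, mov, e1, e2, e3]

theorem mov_mem {v b : ZMod L → ℤ} (hb : IsBin L b) (j : ZMod L) :
    mov v b j = 0 ∨ mov v b j = 1 := flux_mem (hb j)

theorem mov_ne {v b : ZMod L → ℤ} {j : ZMod L} (h : mov v b j ≠ 0) :
    v (j-1) = 1 ∧ v j = 0 := flux_ne h

theorem mov_forced {v b : ZMod L → ℤ} (hv : IsBin L v) {j : ZMod L}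
    (h2 : v (j-2) = 0) (h1 : v (j-1) = 1) (h0 : v j = 0) : mov v b j = 1 :=
  flux_forced (hv (j-3)) h2 h1 h0

theorem mov_block {v b : ZMod L → ℤ} {j : ZMod L}
    (h3 : v (j-3) = 1) (h2 : v (j-2) = 1) (h1 : v (j-1) = 1) (h0 : v j = 0) :
    mov v b j = b j := flux_block h3 h2 h1 h0

theorem mov_wx {v b : ZMod L → ℤ} {j : ZMod L}
    (h3 : v (j-3) = 0) (h2 : v (j-2) = 1) : mov v b j = 0 := flux_wx h3 h2

theorem mov_succ {v b : ZMod L → ℤ} {j : ZMod L} (h : mov v b j ≠ 0) :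
    mov v b (j+1) = 0 := by
  by_contra h'
  have h1 := mov_ne h
  have h2 := mov_ne h'
  have e : j + 1 - 1 = j := by ring
  rw [e] at h2
  rw [h1.2] at h2
  exact absurd h2.1 (by norm_num)

/-- binarity is preserved. -/
theorem upd_isBin {v b : ZMod L → ℤ} (hv : IsBin L v) (hb : IsBin L b) :
    IsBin L (upd L v b) := by
  intro j
  rw [upd_eq_mov]
  rcases mov_mem (v := v) hb j with h0 | h1
  · rcases mov_mem (v := v) hb (j+1) with g0 | g1
    · rcases hv j with e | e <;> simp [h0, g0, e]
    · have := (mov_ne (by rw [g1]; norm_num)).1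
      have e : j + 1 - 1 = j := by ring
      rw [e] at this
      simp [h0, g1, this]
  · have h0 := (mov_ne (by rw [h1]; norm_num)).2
    have : mov v b (j+1) = 0 := mov_succ (by rw [h1]; norm_num)
    simp [h1, this, h0]


section Dict
variable {L : ℕ} {v b x : ZMod L → ℤ} (hv : IsBin L v) (hb : IsBin L b)
  (hx : upd L v b = x)

include hx in
theorem eqn (j : ZMod L) : x j = v j + mov v b j - mov v b (j+1) := by
  rw [← hx, upd_eq_mov]

include hv hb hx in
theorem dict1 {j : ZMod L} (h : mov v b j = 1) :
    x j = 1 ∧ x (j-1) = 0 ∧ v j = 0 ∧ v (j-1) = 1 := by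
  have hne : mov v b j ≠ 0 := by rw [h]; norm_num
  have h10 := mov_ne hne
  have hs : mov v b (j+1) = 0 := mov_succ hne
  have hp : mov v b (j-1) = 0 := by
    rcases mov_mem (v := v) hb (j-1) with h' | h'
    · exact h'
    · have := mov_succ (v := v) (b := b) (j := j-1) (by rw [h']; norm_num)
      have e : j - 1 + 1 = j := by ring
      rw [e] at this
      rw [this] at h; norm_num at h
  have e1 := eqn hx j
  have e2 := eqn hx (j-1)
  have e : j - 1 + 1 = j := by ring
  rw [e] at e2
  constructor
  · rw [e1, h, hs, h10.2]; ring
  refine ⟨?_, h10.2, h10.1⟩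
  rw [e2, h, hp, h10.1]; ring

include hx in
theorem dict2 {j : ZMod L} (h : mov v b j = 0) (h' : mov v b (j+1) = 0) :
    x j = v j := by
  rw [eqn hx j, h, h']; ring

include hx in
theorem dict3 {j : ZMod L} (h : mov v b (j+1) = 1) :
    x j = 0 ∧ v j = 1 := by
  have h1 : v j = 1 := by
    have := (mov_ne (v := v) (b := b) (j := j+1) (by rw [h]; norm_num)).1
    have e : j + 1 - 1 = j := by ring
    rwa [e] at this
  have h0 : mov v b j = 0 := by
    by_contra h''
    rw [mov_succ h''] at h; norm_num at h
  exact ⟨by rw [eqn hx j, h, h0, h1]; ring, h1⟩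

include hv hb hx in
theorem movIff {j : ZMod L} : mov v b j = 1 ↔ (x j = 1 ∧ v j = 0) := by
  constructor
  · intro h; exact ⟨(dict1 hv hb hx h).1, (dict1 hv hb hx h).2.2.1⟩
  · rintro ⟨hxj, hvj⟩
    rcases mov_mem (v := v) hb j with h | h
    · exfalso
      rcases mov_mem (v := v) hb (j+1) with h' | h'
      · have := dict2 hx h h'; rw [hxj, hvj] at this; norm_num at this
      · have := (dict3 hx h').1; rw [hxj] at this; norm_num at this
    · exact h

end Dict

open Finset
section Struct
variable {L : ℕ} [NeZero L]

def Iset (x : ZMod L → ℤ) : Finset (ZMod L) :=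
  univ.filter fun q => x (q-1) = 0 ∧ x q = 1 ∧ x (q+1) = 0
def Pset (x : ZMod L → ℤ) : Finset (ZMod L) :=
  univ.filter fun q => x (q-1) = 0 ∧ x q = 1 ∧ x (q+1) = 1 ∧ x (q+2) = 1
def MM (x : ZMod L → ℤ) : Finset (Finset (ZMod L)) :=
  ((Iset x ∪ Pset x).powerset).filter fun M => Iset x ⊆ M
def predOf (x : ZMod L → ℤ) (M : Finset (ZMod L)) : ZMod L → ℤ :=
  fun j => if j ∈ M then 0 else if j+1 ∈ M then 1 else x j
def Aset (v : ZMod L → ℤ) : Finset (ZMod L) :=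
  univ.filter fun j => v (j-3) = 1 ∧ v (j-2) = 1 ∧ v (j-1) = 1 ∧ v j = 0
def Mov (x v : ZMod L → ℤ) : Finset (ZMod L) :=
  univ.filter fun q => x q = 1 ∧ v q = 0
def Iso (v : ZMod L → ℤ) : Finset (ZMod L) :=
  univ.filter fun r => v r = 0 ∧ v (r+1) = 1 ∧ v (r+2) = 0

theorem mem_Iset {x : ZMod L → ℤ} {q : ZMod L} :
    q ∈ Iset x ↔ (x (q-1) = 0 ∧ x q = 1 ∧ x (q+1) = 0) := by simp [Iset]
theorem mem_Pset {x : ZMod L → ℤ} {q : ZMod L} :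
    q ∈ Pset x ↔ (x (q-1) = 0 ∧ x q = 1 ∧ x (q+1) = 1 ∧ x (q+2) = 1) := by simp [Pset]
theorem mem_MM {x : ZMod L → ℤ} {M : Finset (ZMod L)} :
    M ∈ MM x ↔ (M ⊆ Iset x ∪ Pset x ∧ Iset x ⊆ M) := by
  constructor
  · intro h
    rw [MM, Finset.mem_filter, Finset.mem_powerset] at h; tauto
  · intro h
    rw [MM, Finset.mem_filter, Finset.mem_powerset]; tauto
theorem mem_Aset {v : ZMod L → ℤ} {j : ZMod L} :
    j ∈ Aset v ↔ (v (j-3) = 1 ∧ v (j-2) = 1 ∧ v (j-1) = 1 ∧ v j = 0) := by simp [Aset]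
theorem mem_Mov {x v : ZMod L → ℤ} {q : ZMod L} :
    q ∈ Mov x v ↔ (x q = 1 ∧ v q = 0) := by simp [Mov]
theorem mem_Iso {v : ZMod L → ℤ} {r : ZMod L} :
    r ∈ Iso v ↔ (v r = 0 ∧ v (r+1) = 1 ∧ v (r+2) = 0) := by simp [Iso]

section Classify
variable {v b x : ZMod L → ℤ} (hv : IsBin L v) (hb : IsBin L b) (hx : upd L v b = x)

include hv hb hx in
theorem memMov_iff_mov {q : ZMod L} : q ∈ Mov x v ↔ mov v b q = 1 := by
  rw [mem_Mov, movIff hv hb hx]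

include hv hb hx in
theorem classify_pred : predOf x (Mov x v) = v := by
  funext j
  unfold predOf
  by_cases hj : j ∈ Mov x v
  · simp [hj, (mem_Mov.1 hj).2.symm]
  · by_cases hj1 : j + 1 ∈ Mov x v
    · simp [hj, hj1]
      have := dict3 hx ((memMov_iff_mov hv hb hx).1 hj1)
      exact this.2.symm
    · simp [hj, hj1]
      have h0 : mov v b j = 0 := by
        rcases mov_mem (v := v) hb j with h | h
        · exact h
        · exact absurd ((memMov_iff_mov hv hb hx).2 h) hj
      have h1 : mov v b (j+1) = 0 := by
        rcases mov_mem (v := v) hb (j+1) with h | h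
        · exact h
        · exact absurd ((memMov_iff_mov hv hb hx).2 h) hj1
      exact dict2 hx h0 h1

include hv hb hx in
theorem classify_Isub : Iset x ⊆ Mov x v := by
  intro r hr
  obtain ⟨hm, h0, hp⟩ := mem_Iset.1 hr
  rw [memMov_iff_mov hv hb hx]
  by_contra hmr
  have hmr0 : mov v b r = 0 := (mov_mem (v := v) hb r).resolve_right hmr
  -- mov (r+1) = 0
  have hmr1 : mov v b (r+1) = 0 := by
    rcases mov_mem (v := v) hb (r+1) with h | h
    · exact h
    · have := (dict1 hv hb hx h).2.1
      have e : r + 1 - 1 = r := by ring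
      rw [e, h0] at this; norm_num at this
  -- from x (r-1) = 0 get v (r-1) = 0
  have er : r - 1 + 1 = r := by ring
  have e2 := eqn hx (r-1)
  rw [er, hmr0] at e2
  have hvr1 : v (r-1) = 0 := by
    rw [hm] at e2
    rcases hv (r-1) with h | h
    · exact h
    · exfalso
      rcases mov_mem (v := v) hb (r-1) with h' | h' <;> rw [h, h'] at e2 <;> norm_num at e2
  have hvr : v r = 1 := by
    have := dict2 hx hmr0 hmr1
    rw [h0] at this; exact this.symm
  -- mov (r+2) = 0 by wx
  have hmr2 : mov v b (r+2) = 0 := by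
    have e3 : r + 2 - 3 = r - 1 := by ring
    have e4 : r + 2 - 2 = r := by ring
    exact mov_wx (by rw [e3]; exact hvr1) (by rw [e4]; exact hvr)
  have hvp : v (r+1) = 0 := by
    have e5 : r + 1 + 1 = r + 2 := by ring
    have := dict2 hx (j := r+1) hmr1 (by rw [e5]; exact hmr2)
    rw [hp] at this; exact this.symm
  have : mov v b (r+1) = 1 := by
    have e6 : r + 1 - 2 = r - 1 := by ring
    have e7 : r + 1 - 1 = r := by ring
    exact mov_forced hv (by rw [e6]; exact hvr1) (by rw [e7]; exact hvr) hvp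
  rw [this] at hmr1; norm_num at hmr1

include hv hb hx in
theorem classify_sub (hxb : IsBin L x) : Mov x v ⊆ Iset x ∪ Pset x := by
  intro q hq
  have hmq : mov v b q = 1 := (memMov_iff_mov hv hb hx).1 hq
  obtain ⟨hx1, hxm, hv0, hv1⟩ := dict1 hv hb hx hmq
  rcases hxb (q+1) with h1 | h1
  · exact mem_union_left _ (mem_Iset.2 ⟨hxm, hx1, h1⟩)
  · rcases hxb (q+2) with h2 | h2
    · exfalso
      -- x(q+1)=1, x(q+2)=0 : impossible
      have hm1 : mov v b (q+1) = 0 := mov_succ (by rw [hmq]; norm_num)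
      have hm2 : mov v b (q+2) = 0 := by
        rcases mov_mem (v := v) hb (q+2) with h | h
        · exact h
        · have := (dict1 hv hb hx h).2.1
          have e : q + 2 - 1 = q + 1 := by ring
          rw [e, h1] at this; norm_num at this
      have hvp1 : v (q+1) = 1 := by
        have e5 : q + 1 + 1 = q + 2 := by ring
        have := dict2 hx (j := q+1) hm1 (by rw [e5]; exact hm2)
        rw [h1] at this; exact this.symm
      have hm3 : mov v b (q+3) = 0 := by
        have e3 : q + 3 - 3 = q := by ring
        have e4 : q + 3 - 2 = q + 1 := by ring
        exact mov_wx (by rw [e3]; exact hv0) (by rw [e4]; exact hvp1)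
      have hvp2 : v (q+2) = 0 := by
        have e5 : q + 2 + 1 = q + 3 := by ring
        have := dict2 hx (j := q+2) hm2 (by rw [e5]; exact hm3)
        rw [h2] at this; exact this.symm
      have : mov v b (q+2) = 1 := by
        have e6 : q + 2 - 2 = q := by ring
        have e7 : q + 2 - 1 = q + 1 := by ring
        exact mov_forced hv (by rw [e6]; exact hv0) (by rw [e7]; exact hvp1) hvp2
      rw [this] at hm2; norm_num at hm2
    · exact mem_union_right _ (mem_Pset.2 ⟨hxm, hx1, h1, h2⟩)

include hv hb hx in
theorem classify_MM (hxb : IsBin L x) : Mov x v ∈ MM x :=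
  mem_MM.2 ⟨classify_sub hv hb hx hxb, classify_Isub hv hb hx⟩

include hv hb hx in
theorem classify_b {j : ZMod L} (hj : j ∈ Aset v) :
    b j = if j ∈ Mov x v then 1 else 0 := by
  obtain ⟨h3, h2, h1, h0⟩ := mem_Aset.1 hj
  have hbj : mov v b j = b j := mov_block h3 h2 h1 h0
  by_cases hm : j ∈ Mov x v
  · simp only [hm, if_true]
    rw [← hbj]; exact (memMov_iff_mov hv hb hx).1 hm
  · simp only [hm, if_false]
    rw [← hbj]
    rcases mov_mem (v := v) hb j with h | h
    · exact h
    · exact absurd ((memMov_iff_mov hv hb hx).2 h) hm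
end Classify

section Recon
variable {x : ZMod L → ℤ} {M : Finset (ZMod L)} (hxb : IsBin L x) (hM : M ∈ MM x)

include hM in
theorem memM_x {q : ZMod L} (hq : q ∈ M) : x (q-1) = 0 ∧ x q = 1 := by
  rcases Finset.mem_union.1 ((mem_MM.1 hM).1 hq) with h | h
  · exact ⟨(mem_Iset.1 h).1, (mem_Iset.1 h).2.1⟩
  · exact ⟨(mem_Pset.1 h).1, (mem_Pset.1 h).2.1⟩

include hM in
theorem notM_succ {q : ZMod L} (hq : q ∈ M) : q + 1 ∉ M := by
  intro h
  have h1 := (memM_x hM h).1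
  have e : q + 1 - 1 = q := by ring
  rw [e, (memM_x hM hq).2] at h1; norm_num at h1

include hM in
theorem notM_pred {q : ZMod L} (hq : q ∈ M) : q - 1 ∉ M := by
  intro h
  have := (memM_x hM h).2
  rw [(memM_x hM hq).1] at this; norm_num at this

include hM in
theorem predOf_memM {q : ZMod L} (hq : q ∈ M) :
    predOf x M q = 0 ∧ predOf x M (q-1) = 1 := by
  constructor
  · simp [predOf, hq]
  · have h1 : q - 1 ∉ M := notM_pred hM hq
    have e : q - 1 + 1 = q := by ring
    simp [predOf, h1, e, hq]

theorem predOf_not {j : ZMod L} (h1 : j ∉ M) (h2 : j + 1 ∉ M) :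
    predOf x M j = x j := by simp [predOf, h1, h2]

include hxb in
theorem predOf_isBin : IsBin L (predOf x M) := by
  intro j
  unfold predOf
  split_ifs with h1 h2
  · exact Or.inl rfl
  · exact Or.inr rfl
  · exact hxb j

-- key: if a mover has an occupied second-left neighbour, it is a block mover
include hxb hM in
theorem predOf_block {q : ZMod L} (hq : q ∈ M) (h2 : predOf x M (q-2) = 1) :
    predOf x M (q-3) = 1 ∧ q ∈ Aset (predOf x M) := by
  obtain ⟨hxm, hx1⟩ := memM_x hM hq
  have hq1 : q - 1 ∉ M := notM_pred hM hq
  have hq2 : q - 2 ∉ M := by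
    intro h
    have := (memM_x hM h).2
    have h2' : predOf x M (q - 2) = 0 := by simp [predOf, h]
    rw [h2'] at h2; norm_num at h2
  have e21 : q - 2 + 1 = q - 1 := by ring
  have hx2 : x (q-2) = 1 := by
    rw [predOf_not hq2 (by rw [e21]; exact hq1)] at h2; exact h2
  have hx3 : x (q-3) = 1 := by
    rcases hxb (q-3) with h | h
    · exfalso
      -- then q-2 would be isolated in x, so q-2 ∈ Iset x ⊆ M
      have : q - 2 ∈ Iset x := by
        rw [mem_Iset]
        have e1 : q - 2 - 1 = q - 3 := by ring
        rw [e1, e21]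
        exact ⟨h, hx2, hxm⟩
      exact hq2 ((mem_MM.1 hM).2 this)
    · exact h
  have hq3 : q - 3 ∉ M := by
    intro h
    rcases Finset.mem_union.1 ((mem_MM.1 hM).1 h) with h' | h'
    · have := (mem_Iset.1 h').2.2
      have e : q - 3 + 1 = q - 2 := by ring
      rw [e, hx2] at this; norm_num at this
    · have := (mem_Pset.1 h').2.2.2
      have e : q - 3 + 2 = q - 1 := by ring
      rw [e, hxm] at this; norm_num at this
  have e32 : q - 3 + 1 = q - 2 := by ring
  have hv3 : predOf x M (q-3) = 1 := by
    rw [predOf_not hq3 (by rw [e32]; exact hq2)]; exact hx3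
  refine ⟨hv3, mem_Aset.2 ⟨hv3, h2, (predOf_memM hM hq).2, (predOf_memM hM hq).1⟩⟩

include hxb hM in
theorem recon_mov {b : ZMod L → ℤ}
    (hbc : ∀ j ∈ Aset (predOf x M), b j = if j ∈ M then 1 else 0) (q : ZMod L) :
    mov (predOf x M) b q = if q ∈ M then 1 else 0 := by
  set v := predOf x M with hvdef
  by_cases hq : q ∈ M
  · simp only [hq, if_true]
    obtain ⟨hv0, hv1⟩ := predOf_memM hM hq
    rcases predOf_isBin hxb (q-2) with h | h
    · exact mov_forced (predOf_isBin hxb) h hv1 hv0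
    · obtain ⟨h3, hA⟩ := predOf_block hxb hM hq h
      rw [mov_block h3 h hv1 hv0, hbc q hA]
      simp [hq]
  · simp only [hq, if_false]
    by_contra hne
    obtain ⟨hv1, hv0⟩ := mov_ne hne
    rw [hvdef] at hv1 hv0
    -- v (q-1) = 1 with q-1 ∉ M, q ∉ M gives x (q-1) = 1
    have hq1 : q - 1 ∉ M := by
      intro h
      have := (predOf_memM hM h).1
      rw [this] at hv1; norm_num at hv1
    have e11 : q - 1 + 1 = q := by ring
    have hx1 : x (q-1) = 1 := by
      rw [predOf_not hq1 (by rw [e11]; exact hq)] at hv1; exact hv1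
    -- v q = 0 with q ∉ M gives q+1 ∉ M and x q = 0
    have hqs : q + 1 ∉ M := by
      intro h
      have : predOf x M q = 1 := by
        have e : q + 1 - 1 = q := by ring
        have := (predOf_memM hM h).2
        rwa [e] at this
      rw [this] at hv0; norm_num at hv0
    have hx0 : x q = 0 := by
      rw [predOf_not hq hqs] at hv0; exact hv0
    -- q-2 ∉ M
    have hq2 : q - 2 ∉ M := by
      intro h
      rcases Finset.mem_union.1 ((mem_MM.1 hM).1 h) with h' | h'
      · have := (mem_Iset.1 h').2.2
        have e : q - 2 + 1 = q - 1 := by ring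
        rw [e, hx1] at this; norm_num at this
      · have := (mem_Pset.1 h').2.2.2
        have e : q - 2 + 2 = q := by ring
        rw [e, hx0] at this; norm_num at this
    have e21 : q - 2 + 1 = q - 1 := by ring
    have hv2 : v (q-2) = x (q-2) := predOf_not hq2 (by rw [e21]; exact hq1)
    have hx2 : x (q-2) = 1 := by
      rcases hxb (q-2) with h | h
      · exfalso
        have : q - 1 ∈ Iset x := by
          rw [mem_Iset]
          have e1 : q - 1 - 1 = q - 2 := by ring
          rw [e1, e11]
          exact ⟨h, hx1, hx0⟩
        exact hq1 ((mem_MM.1 hM).2 this)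
      · exact h
    rw [hx2] at hv2
    -- now on v(q-3)
    by_cases hq3 : q - 3 ∈ M
    · have : v (q-3) = 0 := (predOf_memM hM hq3).1
      exact hne (mov_wx this hv2)
    · have e32 : q - 3 + 1 = q - 2 := by ring
      have hv3 : v (q-3) = x (q-3) := predOf_not hq3 (by rw [e32]; exact hq2)
      rcases hxb (q-3) with h | h
      · rw [h] at hv3
        exact hne (mov_wx hv3 hv2)
      · rw [h] at hv3
        have hA : q ∈ Aset v := mem_Aset.2 ⟨hv3, hv2, hv1, hv0⟩
        have := mov_block (v := v) (b := b) hv3 hv2 hv1 hv0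
        rw [this, hbc q hA] at hne
        simp [hq] at hne

include hxb hM in
theorem recon_upd {b : ZMod L → ℤ}
    (hbc : ∀ j ∈ Aset (predOf x M), b j = if j ∈ M then 1 else 0) :
    upd L (predOf x M) b = x := by
  funext j
  rw [upd_eq_mov, recon_mov hxb hM hbc j, recon_mov hxb hM hbc (j+1)]
  by_cases hj : j ∈ M
  · have hj1 : j + 1 ∉ M := notM_succ hM hj
    simp only [hj, hj1, if_true, if_false]
    rw [(predOf_memM hM hj).1, (memM_x hM hj).2]; ring
  · by_cases hj1 : j + 1 ∈ M
    · simp only [hj, hj1, if_true, if_false]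
      have e : j + 1 - 1 = j := by ring
      have h1 : predOf x M j = 1 := by
        have := (predOf_memM hM hj1).2; rwa [e] at this
      have h0 : x j = 0 := by
        have := (memM_x hM hj1).1; rwa [e] at this
      rw [h1, h0]; ring
    · simp only [hj, hj1, if_false]
      rw [predOf_not hj hj1]; ring

include hM in
theorem Mov_predOf : Mov x (predOf x M) = M := by
  ext q
  rw [mem_Mov]
  constructor
  · rintro ⟨hx1, hv0⟩
    by_contra hq
    by_cases h1 : q + 1 ∈ M
    · have e : q + 1 - 1 = q := by ring
      have h' := (memM_x hM h1).1
      rw [e, hx1] at h'; norm_num at h'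
    · rw [predOf_not hq h1, hx1] at hv0; norm_num at hv0
  · intro hq
    exact ⟨(memM_x hM hq).2, (predOf_memM hM hq).1⟩
end Recon

section Count
variable {x : ZMod L → ℤ} {M : Finset (ZMod L)} (hxb : IsBin L x) (hM : M ∈ MM x)

include hxb hM in
theorem Iso_card : (Iso (predOf x M)).card = (M \ Aset (predOf x M)).card := by
  refine Finset.card_bij' (fun r _ => r + 2) (fun q _ => q - 2) ?_ ?_ (fun r _ => by ring) (fun q _ => by ring)
  · intro r hr
    obtain ⟨h0, h1, h2⟩ := mem_Iso.1 hr
    have hr2M : r + 2 ∈ M := by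
      by_contra hq
      have hr1M : r + 1 ∉ M := by
        intro h
        rw [(predOf_memM hM h).1] at h1; norm_num at h1
      have e1 : r + 1 + 1 = r + 2 := by ring
      have hx1 : x (r+1) = 1 := by
        rw [predOf_not hr1M (by rw [e1]; exact hq)] at h1; exact h1
      have hr3M : r + 3 ∉ M := by
        intro h
        have e : r + 3 - 1 = r + 2 := by ring
        have := (predOf_memM hM h).2
        rw [e] at this; rw [this] at h2; norm_num at h2
      have e2 : r + 2 + 1 = r + 3 := by ring
      have hx2 : x (r+2) = 0 := by
        rw [predOf_not hq (by rw [e2]; exact hr3M)] at h2; exact h2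
      have hrM : r ∉ M := by
        intro h
        rcases Finset.mem_union.1 ((mem_MM.1 hM).1 h) with h' | h'
        · have := (mem_Iset.1 h').2.2
          rw [hx1] at this; norm_num at this
        · have := (mem_Pset.1 h').2.2.2
          rw [hx2] at this; norm_num at this
      have hx0 : x r = 0 := by
        rw [predOf_not hrM hr1M] at h0; exact h0
      have : r + 1 ∈ Iset x := by
        rw [mem_Iset]
        have e : r + 1 - 1 = r := by ring
        rw [e, e1]
        exact ⟨hx0, hx1, hx2⟩
      exact hr1M ((mem_MM.1 hM).2 this)
    refine Finset.mem_sdiff.2 ⟨hr2M, ?_⟩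
    intro hA
    have := (mem_Aset.1 hA).2.1
    have e : r + 2 - 2 = r := by ring
    rw [e, h0] at this; norm_num at this
  · intro q hq
    obtain ⟨hqM, hqA⟩ := Finset.mem_sdiff.1 hq
    rw [mem_Iso]
    have e1 : q - 2 + 1 = q - 1 := by ring
    have e2 : q - 2 + 2 = q := by ring
    rw [e1, e2]
    refine ⟨?_, (predOf_memM hM hqM).2, (predOf_memM hM hqM).1⟩
    rcases predOf_isBin hxb (q - 2) with h | h
    · exact h
    · exact absurd (predOf_block hxb hM hqM h).2 hqA

/-- shift invariance of pattern counts -/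
theorem card_shift (P : ZMod L → Prop) [DecidablePred P] (c : ZMod L) :
    ((Finset.univ.filter fun q => P (q - c)).card : ℕ) = (Finset.univ.filter P).card := by
  refine Finset.card_bij' (fun q _ => q - c) (fun q _ => q + c) ?_ ?_ (fun q _ => by ring) (fun q _ => by ring)
  · intro q hq
    exact Finset.mem_filter.2 ⟨Finset.mem_univ _, (Finset.mem_filter.1 hq).2⟩
  · intro q hq
    refine Finset.mem_filter.2 ⟨Finset.mem_univ _, ?_⟩
    have e : q + c - c = q := by ring
    rw [e]
    exact (Finset.mem_filter.1 hq).2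

theorem patCount_conv (v : ZMod L → ℤ) (w : List ℤ) :
    patCount L v w =
      (Finset.univ.filter fun q : ZMod L => ∀ i < w.length, v (q + (i : ℕ)) = w.getD i 0).card := by
  unfold patCount
  refine Finset.card_bij' (fun j _ => ((j : ℕ) : ZMod L)) (fun q _ => (q : ZMod L).val) ?_ ?_
    (fun j hj => ZMod.val_cast_of_lt (Finset.mem_range.1 (Finset.mem_filter.1 hj).1))
    (fun q _ => by simp [ZMod.natCast_val, ZMod.cast_id])
  · intro j hj
    refine Finset.mem_filter.2 ⟨Finset.mem_univ _, ?_⟩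
    intro i hi
    have := (Finset.mem_filter.1 hj).2 i hi
    rwa [Nat.cast_add] at this
  · intro q hq
    refine Finset.mem_filter.2 ⟨Finset.mem_range.2 (ZMod.val_lt q), ?_⟩
    intro i hi
    have := (Finset.mem_filter.1 hq).2 i hi
    rwa [Nat.cast_add, ZMod.natCast_val, ZMod.cast_id] at *
end Count


section Pat
variable {L : ℕ} [NeZero L]

def T1110 (v : ZMod L → ℤ) : Finset (ZMod L) :=
  Finset.univ.filter fun q => v q = 1 ∧ v (q+1) = 1 ∧ v (q+2) = 1 ∧ v (q+3) = 0
def T0111 (v : ZMod L → ℤ) : Finset (ZMod L) :=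
  Finset.univ.filter fun q => v q = 0 ∧ v (q+1) = 1 ∧ v (q+2) = 1 ∧ v (q+3) = 1

theorem patCount010 (v : ZMod L → ℤ) : patCount L v [0, 1, 0] = (Iso v).card := by
  rw [patCount_conv]
  apply congrArg Finset.card
  ext q
  rw [Finset.mem_filter, mem_Iso]
  simp only [Finset.mem_univ, true_and, List.length_cons, List.length_nil]
  constructor
  · intro h
    have h0 := h 0 (by norm_num)
    have h1 := h 1 (by norm_num)
    have h2 := h 2 (by norm_num)
    norm_num at h0 h1 h2
    exact ⟨h0, h1, h2⟩
  · rintro ⟨h0, h1, h2⟩ i hi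
    interval_cases i <;> norm_num [h0, h1, h2]

theorem patCount1110 (v : ZMod L → ℤ) : patCount L v [1, 1, 1, 0] = (T1110 v).card := by
  rw [patCount_conv]
  apply congrArg Finset.card
  ext q
  rw [Finset.mem_filter, T1110, Finset.mem_filter]
  simp only [Finset.mem_univ, true_and, List.length_cons, List.length_nil]
  constructor
  · intro h
    have h0 := h 0 (by norm_num)
    have h1 := h 1 (by norm_num)
    have h2 := h 2 (by norm_num)
    have h3 := h 3 (by norm_num)
    norm_num at h0 h1 h2 h3
    exact ⟨h0, h1, h2, h3⟩
  · rintro ⟨h0, h1, h2, h3⟩ i hi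
    interval_cases i <;> norm_num [h0, h1, h2, h3]

theorem Aset_card (v : ZMod L → ℤ) : (Aset v).card = (T1110 v).card := by
  have : Aset v = Finset.univ.filter
      (fun j => (fun q => v q = 1 ∧ v (q+1) = 1 ∧ v (q+2) = 1 ∧ v (q+3) = 0) (j - 3)) := by
    ext j
    rw [mem_Aset, Finset.mem_filter]
    have e1 : j - 3 + 1 = j - 2 := by ring
    have e2 : j - 3 + 2 = j - 1 := by ring
    have e3 : j - 3 + 3 = j := by ring
    simp only [Finset.mem_univ, true_and, e1, e2, e3]
  rw [this, T1110]
  exact card_shift (fun q => v q = 1 ∧ v (q+1) = 1 ∧ v (q+2) = 1 ∧ v (q+3) = 0) 3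

theorem Iset_card (x : ZMod L → ℤ) : (Iset x).card = (Iso x).card := by
  have : Iset x = Finset.univ.filter
      (fun j => (fun q => x q = 0 ∧ x (q+1) = 1 ∧ x (q+2) = 0) (j - 1)) := by
    ext j
    rw [mem_Iset, Finset.mem_filter]
    have e1 : j - 1 + 1 = j := by ring
    have e2 : j - 1 + 2 = j + 1 := by ring
    simp only [Finset.mem_univ, true_and, e1, e2]
  rw [this, Iso]
  exact card_shift (fun q => x q = 0 ∧ x (q+1) = 1 ∧ x (q+2) = 0) 1

theorem telescope {v : ZMod L → ℤ} (hv : IsBin L v) :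
    (T0111 v).card = (T1110 v).card := by
  classical
  set Q4 : Finset (ZMod L) :=
    Finset.univ.filter (fun q => v q = 1 ∧ v (q+1) = 1 ∧ v (q+2) = 1 ∧ v (q+3) = 1) with hQ4
  set S1 : Finset (ZMod L) :=
    Finset.univ.filter (fun q => v q = 1 ∧ v (q+1) = 1 ∧ v (q+2) = 1) with hS1
  set S0 : Finset (ZMod L) :=
    Finset.univ.filter (fun q => v (q+1) = 1 ∧ v (q+2) = 1 ∧ v (q+3) = 1) with hS0
  have d0 : Disjoint (T0111 v) Q4 := by
    rw [Finset.disjoint_left]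
    intro q h1 h2
    rw [T0111, Finset.mem_filter] at h1
    rw [hQ4, Finset.mem_filter] at h2
    rw [h1.2.1] at h2; norm_num at h2
  have d1 : Disjoint (T1110 v) Q4 := by
    rw [Finset.disjoint_left]
    intro q h1 h2
    rw [T1110, Finset.mem_filter] at h1
    rw [hQ4, Finset.mem_filter] at h2
    rw [h1.2.2.2.2] at h2; norm_num at h2
  have u0 : S0 = T0111 v ∪ Q4 := by
    ext q
    rw [hS0, hQ4, T0111, Finset.mem_union, Finset.mem_filter, Finset.mem_filter,
      Finset.mem_filter]
    simp only [Finset.mem_univ, true_and]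
    constructor
    · rintro ⟨h1, h2, h3⟩
      rcases hv q with h | h
      · exact Or.inl ⟨h, h1, h2, h3⟩
      · exact Or.inr ⟨h, h1, h2, h3⟩
    · rintro (⟨_, h⟩ | ⟨_, h⟩) <;> exact h
  have u1 : S1 = T1110 v ∪ Q4 := by
    ext q
    rw [hS1, hQ4, T1110, Finset.mem_union, Finset.mem_filter, Finset.mem_filter,
      Finset.mem_filter]
    simp only [Finset.mem_univ, true_and]
    constructor
    · rintro ⟨h1, h2, h3⟩
      rcases hv (q+3) with h | h
      · exact Or.inl ⟨h1, h2, h3, h⟩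
      · exact Or.inr ⟨h1, h2, h3, h⟩
    · rintro (⟨h1, h2, h3, _⟩ | ⟨h1, h2, h3, _⟩) <;> exact ⟨h1, h2, h3⟩
  have hshift : S0.card = S1.card := by
    have : S0 = Finset.univ.filter
        (fun j => (fun q => v q = 1 ∧ v (q+1) = 1 ∧ v (q+2) = 1) (j - (-1))) := by
      ext j
      rw [hS0, Finset.mem_filter, Finset.mem_filter]
      have e0 : j - (-1) = j + 1 := by ring
      have e1 : j + 1 + 1 = j + 2 := by ring
      have e2 : j + 1 + 2 = j + 3 := by ring
      simp only [Finset.mem_univ, true_and, e0, e1, e2]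
    rw [this, hS1]
    exact card_shift (fun q => v q = 1 ∧ v (q+1) = 1 ∧ v (q+2) = 1) (-1)
  have c0 : S0.card = (T0111 v).card + Q4.card := by
    rw [u0]; exact Finset.card_union_of_disjoint d0
  have c1 : S1.card = (T1110 v).card + Q4.card := by
    rw [u1]; exact Finset.card_union_of_disjoint d1
  omega

theorem Pset_card {x : ZMod L → ℤ} (hxb : IsBin L x) :
    (Pset x).card = (T1110 x).card := by
  have : Pset x = Finset.univ.filter
      (fun j => (fun q => x q = 0 ∧ x (q+1) = 1 ∧ x (q+2) = 1 ∧ x (q+3) = 1) (j - 1)) := by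
    ext j
    rw [mem_Pset, Finset.mem_filter]
    have e1 : j - 1 + 1 = j := by ring
    have e2 : j - 1 + 2 = j + 1 := by ring
    have e3 : j - 1 + 3 = j + 2 := by ring
    simp only [Finset.mem_univ, true_and, e1, e2, e3]
  rw [this]
  have : (Finset.univ.filter
      (fun j => (fun q => x q = 0 ∧ x (q+1) = 1 ∧ x (q+2) = 1 ∧ x (q+3) = 1) (j - 1))).card
      = (T0111 x).card := by
    rw [T0111]; exact card_shift (fun q => x q = 0 ∧ x (q+1) = 1 ∧ x (q+2) = 1 ∧ x (q+3) = 1) 1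
  rw [this]
  exact telescope hxb
end Pat

section Sums
variable {L : ℕ} [NeZero L] {α : ℝ}

theorem mem_cube {b : ZMod L → ℤ} : b ∈ cube L ↔ IsBin L b := by
  simp [cube, Fintype.mem_piFinset, IsBin]

/-- the Bernoulli factor -/
noncomputable def g (α : ℝ) (t : ℤ) : ℝ := α ^ t.toNat * (1 - α) ^ (1 - t).toNat

noncomputable def PP (L : ℕ) [NeZero L] (α : ℝ) (b : ZMod L → ℤ) : ℝ := ∏ j, g α (b j)

theorem g_zero : g α 0 = 1 - α := by simp [g]
theorem g_one : g α 1 = α := by simp [g]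

theorem g_pos (hα0 : 0 < α) (hα1 : α < 1) (t : ℤ) : 0 < g α t :=
  mul_pos (pow_pos hα0 _) (pow_pos (by linarith) _)

theorem PP_pos (hα0 : 0 < α) (hα1 : α < 1) (b : ZMod L → ℤ) : 0 < PP L α b :=
  Finset.prod_pos fun j _ => g_pos hα0 hα1 _

theorem sum_cube_constrained (A : Finset (ZMod L)) (σ : ZMod L → ℤ)
    (hσ : ∀ j ∈ A, σ j = 0 ∨ σ j = 1) :
    ∑ b ∈ (cube L).filter (fun b => ∀ j ∈ A, b j = σ j), PP L α b
      = ∏ j ∈ A, g α (σ j) := by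
  classical
  have hset : (cube L).filter (fun b => ∀ j ∈ A, b j = σ j)
      = Fintype.piFinset (fun j => if j ∈ A then {σ j} else ({0, 1} : Finset ℤ)) := by
    ext b
    rw [Finset.mem_filter, mem_cube, Fintype.mem_piFinset]
    constructor
    · rintro ⟨hb, hc⟩ j
      by_cases hj : j ∈ A
      · simp [hj, hc j hj]
      · simpa [hj] using hb j
    · intro h
      constructor
      · intro j
        have := h j
        by_cases hj : j ∈ A
        · simp only [hj, if_true, Finset.mem_singleton] at this
          rw [this]
          exact (hσ j hj).imp id id
        · simpa [hj] using this
      · intro j hj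
        have := h j
        simpa [hj] using this
  rw [hset]
  unfold PP
  rw [← Finset.prod_univ_sum]
  have : ∀ j : ZMod L, (∑ t ∈ (if j ∈ A then {σ j} else ({0, 1} : Finset ℤ)), g α t)
      = if j ∈ A then g α (σ j) else 1 := by
    intro j
    by_cases hj : j ∈ A
    · simp [hj]
    · simp only [hj, if_false]
      rw [Finset.sum_pair (by norm_num : (0:ℤ) ≠ 1), g_zero, g_one]
      ring
  rw [Finset.prod_congr rfl (fun j _ => this j)]
  rw [Finset.prod_ite_mem]
  rw [Finset.univ_inter]

theorem sum_PP : ∑ b ∈ cube L, PP L α b = 1 := by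
  classical
  have h0 : (cube L).filter (fun b => ∀ j ∈ (∅ : Finset (ZMod L)), b j = 0) = cube L := by
    apply Finset.filter_true_of_mem; intro b _; simp
  have := sum_cube_constrained (α := α) (∅ : Finset (ZMod L)) (fun _ => 0) (by simp)
  rw [h0] at this
  simpa using this

theorem transProb_eq (x' x : ZMod L → ℤ) :
    transProb L α x' x = ∑ b ∈ cube L, if upd L x' b = x then PP L α b else 0 := by
  unfold transProb PP g
  apply Finset.sum_congr rfl
  intro b _
  by_cases h : upd L x' b = x <;> simp [h]

theorem transProb_nonneg (hα0 : 0 < α) (hα1 : α < 1) (x' x : ZMod L → ℤ) :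
    0 ≤ transProb L α x' x := by
  rw [transProb_eq]
  apply Finset.sum_nonneg
  intro b _
  by_cases h : upd L x' b = x <;> simp [h, le_of_lt (PP_pos hα0 hα1 b)]

theorem row_sum (hα0 : 0 < α) (hα1 : α < 1) {x' : ZMod L → ℤ} (hx' : IsBin L x') :
    ∑ x ∈ cube L, transProb L α x' x = 1 := by
  have : ∀ x ∈ cube L, transProb L α x' x
      = ∑ b ∈ cube L, if upd L x' b = x then PP L α b else 0 :=
    fun x _ => transProb_eq x' x
  rw [Finset.sum_congr rfl this, Finset.sum_comm]
  have : ∀ b ∈ cube L, (∑ x ∈ cube L, if upd L x' b = x then PP L α b else 0) = PP L α b := by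
    intro b hb
    rw [Finset.sum_ite_eq (cube L) (upd L x' b) (fun _ => PP L α b)]
    simp [mem_cube.2 (upd_isBin hx' (mem_cube.1 hb))]
  rw [Finset.sum_congr rfl this, sum_PP]

theorem transProb_lower (hα0 : 0 < α) (hα1 : α < 1) {x' b : ZMod L → ℤ} (hb : b ∈ cube L) :
    PP L α b ≤ transProb L α x' (upd L x' b) := by
  rw [transProb_eq]
  have h1 := Finset.single_le_sum (f := fun c => if upd L x' c = upd L x' b then PP L α c else 0)
    (fun c _ => by
      by_cases h : upd L x' c = upd L x' b <;>
        simp [h, le_of_lt (PP_pos hα0 hα1 c)]) hb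
  simpa using h1

theorem transProb_step (hα0 : 0 < α) (hα1 : α < 1) {x' x : ZMod L → ℤ}
    (h : transProb L α x' x ≠ 0) : ∃ b, IsBin L b ∧ upd L x' b = x := by
  rw [transProb_eq] at h
  obtain ⟨b, hb, hne⟩ := Finset.exists_ne_zero_of_sum_ne_zero h
  refine ⟨b, mem_cube.1 hb, ?_⟩
  by_contra hup
  rw [if_neg hup] at hne
  exact hne rfl
end Sums
end Struct

section Main
variable {L : ℕ} [NeZero L] {α : ℝ}

noncomputable def Bset (L : ℕ) [NeZero L] (x : ZMod L → ℤ) (M : Finset (ZMod L)) :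
    Finset (ZMod L → ℤ) :=
  (cube L).filter (fun b => ∀ j ∈ Aset (predOf x M), b j = if j ∈ M then 1 else 0)

theorem disjoint_IP (x : ZMod L → ℤ) : Disjoint (Iset x) (Pset x) := by
  rw [Finset.disjoint_left]
  intro q h1 h2
  have := (mem_Iset.1 h1).2.2
  rw [(mem_Pset.1 h2).2.2.1] at this
  norm_num at this

theorem weight_eq (v : ZMod L → ℤ) :
    weight L α v = α ^ patCount L v [0,1,0] /
      (1 - α) ^ (patCount L v [1,1,1,0] + patCount L v [0,1,0]) := rfl

/-- pure real arithmetic for the per-M term -/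
theorem term_algebra (hα0 : 0 < α) (hα1 : α < 1) (i s d : ℕ) :
    α ^ i / (1 - α) ^ ((s + d) + i) * (α ^ s * (1 - α) ^ d)
      = (α / (1 - α)) ^ (i + s) := by
  have h1 : (1 - α) ≠ 0 := by linarith
  rw [div_pow, pow_add, pow_add, pow_add]
  field_simp
  ring

theorem final_algebra (hα0 : 0 < α) (hα1 : α < 1) (i t : ℕ) :
    (α / (1 - α)) ^ i * (α / (1 - α) + 1) ^ t = α ^ i / (1 - α) ^ (t + i) := by
  have h1 : (1 - α) ≠ 0 := by linarith
  have h2 : α / (1 - α) + 1 = 1 / (1 - α) := by field_simp; ring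
  rw [h2, div_pow, div_pow, pow_add]
  field_simp
  ring

/-- the double sum over predecessors and bits, reindexed by (M, b). -/
theorem reindex (hxb : IsBin L x) :
    ∑ p ∈ ((cube L) ×ˢ (cube L)).filter (fun p => upd L p.1 p.2 = x),
        PP L α p.2 * weight L α p.1
      = ∑ s ∈ (MM x).sigma (fun M => Bset L x M),
          PP L α s.2 * weight L α (predOf x s.1) := by
  apply Finset.sum_bij' (fun p _ => (⟨Mov x p.1, p.2⟩ : Σ _ : Finset (ZMod L), (ZMod L → ℤ)))
    (fun s _ => (predOf x s.1, s.2))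
  · rintro ⟨v, b⟩ hp
    rw [Finset.mem_filter, Finset.mem_product] at hp
    obtain ⟨⟨hv, hb⟩, hup⟩ := hp
    have hvb := mem_cube.1 hv
    have hbb := mem_cube.1 hb
    rw [Finset.mem_sigma]
    constructor
    · exact classify_MM hvb hbb hup hxb
    · rw [Bset, Finset.mem_filter]
      refine ⟨hb, ?_⟩
      intro j hj
      rw [classify_pred hvb hbb hup] at hj
      exact classify_b hvb hbb hup hj
  · rintro ⟨M, b⟩ hs
    rw [Finset.mem_sigma] at hs
    obtain ⟨hM, hbB⟩ := hs
    rw [Bset, Finset.mem_filter] at hbB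
    rw [Finset.mem_filter, Finset.mem_product]
    exact ⟨⟨mem_cube.2 (predOf_isBin hxb), hbB.1⟩, recon_upd hxb hM hbB.2⟩
  · rintro ⟨v, b⟩ hp
    rw [Finset.mem_filter, Finset.mem_product] at hp
    obtain ⟨⟨hv, hb⟩, hup⟩ := hp
    have := classify_pred (mem_cube.1 hv) (mem_cube.1 hb) hup
    simp [this]
  · rintro ⟨M, b⟩ hs
    rw [Finset.mem_sigma] at hs
    simp [Mov_predOf hs.1]
  · rintro ⟨v, b⟩ hp
    rw [Finset.mem_filter, Finset.mem_product] at hp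
    obtain ⟨⟨hv, hb⟩, hup⟩ := hp
    rw [classify_pred (mem_cube.1 hv) (mem_cube.1 hb) hup]

theorem inner_b_sum (hxb : IsBin L x) {M : Finset (ZMod L)} (hM : M ∈ MM x) :
    ∑ b ∈ Bset L x M, PP L α b
      = α ^ ((Aset (predOf x M)) ∩ M).card * (1 - α) ^ ((Aset (predOf x M)) \ M).card := by
  classical
  rw [Bset]
  rw [sum_cube_constrained (Aset (predOf x M)) (fun j => if j ∈ M then 1 else 0)
    (fun j _ => by by_cases h : j ∈ M <;> simp [h])]
  have : ∀ j ∈ Aset (predOf x M),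
      g α (if j ∈ M then 1 else 0) = if j ∈ M then α else (1 - α) := by
    intro j _
    by_cases h : j ∈ M <;> simp [h, g_one, g_zero]
  rw [Finset.prod_congr rfl this, Finset.prod_ite, Finset.prod_const, Finset.prod_const,
    Finset.filter_mem_eq_inter]
  congr 2
  rw [Finset.sdiff_eq_filter]

theorem per_M (hα0 : 0 < α) (hα1 : α < 1) (hxb : IsBin L x)
    {M : Finset (ZMod L)} (hM : M ∈ MM x) :
    weight L α (predOf x M) * (∑ b ∈ Bset L x M, PP L α b)
      = (α / (1 - α)) ^ M.card := by
  rw [inner_b_sum hxb hM, weight_eq, patCount010, patCount1110,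
    ← Aset_card (predOf x M), Iso_card hxb hM]
  have hA : (Aset (predOf x M)).card
      = ((Aset (predOf x M)) ∩ M).card + ((Aset (predOf x M)) \ M).card := by
    rw [← Finset.card_sdiff_add_card_inter (Aset (predOf x M)) M]; omega
  have hMc : M.card = (M \ (Aset (predOf x M))).card + (M ∩ (Aset (predOf x M))).card :=
    (Finset.card_sdiff_add_card_inter M (Aset (predOf x M))).symm
  have hint : (M ∩ (Aset (predOf x M))).card = ((Aset (predOf x M)) ∩ M).card := by
    rw [Finset.inter_comm]
  rw [hA, hMc, hint]
  exact term_algebra hα0 hα1 _ _ _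

theorem sum_over_MM (hα0 : 0 < α) (hα1 : α < 1) (hxb : IsBin L x) :
    ∑ M ∈ MM x, (α / (1 - α)) ^ M.card
      = (α / (1 - α)) ^ (Iset x).card * (α / (1 - α) + 1) ^ (Pset x).card := by
  classical
  have hbij : ∑ M ∈ MM x, (α / (1 - α)) ^ M.card
      = ∑ T ∈ (Pset x).powerset, (α / (1 - α)) ^ (Iset x ∪ T).card := by
    apply Finset.sum_bij' (fun M _ => M \ Iset x) (fun T _ => Iset x ∪ T)
    · intro M hM
      rw [Finset.mem_powerset]
      intro q hq
      rw [Finset.mem_sdiff] at hq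
      rcases Finset.mem_union.1 ((mem_MM.1 hM).1 hq.1) with h | h
      · exact absurd h hq.2
      · exact h
    · intro T hT
      rw [Finset.mem_powerset] at hT
      rw [mem_MM]
      exact ⟨Finset.union_subset_union_right hT, Finset.subset_union_left⟩
    · intro M hM
      exact Finset.union_sdiff_of_subset (mem_MM.1 hM).2
    · intro T hT
      rw [Finset.mem_powerset] at hT
      exact Finset.union_sdiff_cancel_left
        (Finset.disjoint_of_subset_right hT (disjoint_IP x))
    · intro M hM
      rw [Finset.union_sdiff_of_subset (mem_MM.1 hM).2]
  rw [hbij]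
  have hcard : ∀ T ∈ (Pset x).powerset, (Iset x ∪ T).card = (Iset x).card + T.card := by
    intro T hT
    rw [Finset.mem_powerset] at hT
    exact Finset.card_union_of_disjoint
      (Finset.disjoint_of_subset_right hT (disjoint_IP x))
  rw [Finset.sum_congr rfl (fun T hT => by rw [hcard T hT, pow_add])]
  rw [← Finset.mul_sum]
  congr 1
  have := Finset.prod_add (fun _ : ZMod L => α / (1 - α)) (fun _ => (1:ℝ)) (Pset x)
  rw [Finset.prod_const] at this
  rw [this]
  apply Finset.sum_congr rfl
  intro T hT
  rw [Finset.prod_const, Finset.prod_const, one_pow, mul_one]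

/-- ★ full-cube stationarity -/
theorem fullStationary (hα0 : 0 < α) (hα1 : α < 1) {x : ZMod L → ℤ} (hxb : IsBin L x) :
    ∑ v ∈ cube L, transProb L α v x * weight L α v = weight L α x := by
  classical
  have step1 : ∀ v ∈ cube L, transProb L α v x * weight L α v
      = ∑ b ∈ cube L, (if upd L v b = x then PP L α b * weight L α v else 0) := by
    intro v _
    rw [transProb_eq, Finset.sum_mul]
    apply Finset.sum_congr rfl
    intro b _
    by_cases h : upd L v b = x <;> simp [h]
  rw [Finset.sum_congr rfl step1, ← Finset.sum_product']
  rw [← Finset.sum_filter]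
  rw [reindex hxb]
  rw [Finset.sum_sigma]
  have step2 : ∀ M ∈ MM x,
      (∑ b ∈ Bset L x M, PP L α b * weight L α (predOf x M))
        = (α / (1 - α)) ^ M.card := by
    intro M hM
    rw [← Finset.sum_mul, mul_comm]
    exact per_M hα0 hα1 hxb hM
  rw [Finset.sum_congr rfl step2, sum_over_MM hα0 hα1 hxb]
  rw [Iset_card, ← patCount010, Pset_card hxb, ← patCount1110, weight_eq]
  exact final_algebra hα0 hα1 _ _
end Main

section Markov
variable {L : ℕ} [NeZero L] {α : ℝ}

theorem reach_refl (x : ZMod L → ℤ) : reach L x x := ⟨0, rfl⟩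

theorem reach_step {x y : ZMod L → ℤ} (h : step L x y) : reach L x y :=
  ⟨1, y, h, rfl⟩

theorem chain_trans : ∀ {m n : ℕ} {x y z : ZMod L → ℤ},
    chain L m x y → chain L n y z → chain L (m + n) x z := by
  intro m
  induction m with
  | zero => intro n x y z h1 h2; rw [show x = y from h1]; simpa using h2
  | succ k ih =>
    intro n x y z h1 h2
    obtain ⟨w, hw, hc⟩ := h1
    have : k + 1 + n = (k + n) + 1 := by omega
    rw [this]
    exact ⟨w, hw, ih hc h2⟩

theorem reach_trans {x y z : ZMod L → ℤ} (h1 : reach L x y) (h2 : reach L y z) :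
    reach L x z := by
  obtain ⟨m, hm⟩ := h1
  obtain ⟨n, hn⟩ := h2
  exact ⟨m + n, chain_trans hm hn⟩

theorem chain_isBin : ∀ {n : ℕ} {x y : ZMod L → ℤ},
    chain L n x y → IsBin L x → IsBin L y := by
  intro n
  induction n with
  | zero => intro x y h hx; rwa [← h]
  | succ k ih =>
    intro x y h hx
    obtain ⟨w, ⟨b, hb, hup⟩, hc⟩ := h
    exact ih hc (hup ▸ upd_isBin hx hb)

theorem reach_isBin {x y : ZMod L → ℤ} (h : reach L x y) (hx : IsBin L x) : IsBin L y := by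
  obtain ⟨n, hn⟩ := h; exact chain_isBin hn hx

theorem weight_pos (hα0 : 0 < α) (hα1 : α < 1) (v : ZMod L → ℤ) : 0 < weight L α v := by
  rw [weight_eq]
  exact div_pos (pow_pos hα0 _) (pow_pos (by linarith) _)

/-- every edge of the chain can be reversed -/
theorem reach_back (hα0 : 0 < α) (hα1 : α < 1) {v b : ZMod L → ℤ}
    (hv : IsBin L v) (hb : IsBin L b) : reach L (upd L v b) v := by
  classical
  by_contra hnr
  set y := upd L v b with hy
  set R := (cube L).filter (fun z => reach L z v) with hR
  have hvR : v ∈ R := Finset.mem_filter.2 ⟨mem_cube.2 hv, reach_refl v⟩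
  have hyc : y ∈ cube L := mem_cube.2 (upd_isBin hv hb)
  have hyR : y ∉ R := fun h => hnr ((Finset.mem_filter.1 h).2)
  -- stationary sum over R
  have key : ∀ z ∈ R, weight L α z = ∑ u ∈ cube L, transProb L α u z * weight L α u := by
    intro z hz
    exact (fullStationary hα0 hα1 (mem_cube.1 (Finset.mem_filter.1 hz).1)).symm
  have h1 : ∑ z ∈ R, weight L α z
      = ∑ u ∈ cube L, ∑ z ∈ R, transProb L α u z * weight L α u := by
    rw [Finset.sum_congr rfl key, Finset.sum_comm]
  -- terms with u ∉ R vanish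
  have h2 : ∑ u ∈ cube L, ∑ z ∈ R, transProb L α u z * weight L α u
      = ∑ u ∈ R, ∑ z ∈ R, transProb L α u z * weight L α u := by
    apply (Finset.sum_subset (Finset.filter_subset _ _) ?_).symm
    intro u hu huR
    apply Finset.sum_eq_zero
    intro z hz
    have : transProb L α u z = 0 := by
      by_contra hne
      obtain ⟨b', hb', hup⟩ := transProb_step hα0 hα1 hne
      have : reach L u v :=
        reach_trans (reach_step ⟨b', hb', hup⟩) (Finset.mem_filter.1 hz).2
      exact huR (Finset.mem_filter.2 ⟨hu, this⟩)
    rw [this, zero_mul]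
  have hform : ∀ u, (∑ z ∈ R, transProb L α u z * weight L α u)
      = (∑ z ∈ R, transProb L α u z) * weight L α u := by
    intro u; rw [Finset.sum_mul]
  -- each row-sum over R is ≤ 1
  have hle : ∀ u ∈ R, (∑ z ∈ R, transProb L α u z) ≤ 1 := by
    intro u hu
    have hub := mem_cube.1 (Finset.mem_filter.1 hu).1
    calc (∑ z ∈ R, transProb L α u z)
        ≤ ∑ z ∈ cube L, transProb L α u z := by
          apply Finset.sum_le_sum_of_subset_of_nonneg (Finset.filter_subset _ _)
          intro z _ _
          exact transProb_nonneg hα0 hα1 u z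
      _ = 1 := row_sum hα0 hα1 hub
  -- at u = v it is < 1
  have hlt : (∑ z ∈ R, transProb L α v z) < 1 := by
    have hpos : 0 < transProb L α v y := by
      calc (0:ℝ) < PP L α b := PP_pos hα0 hα1 b
        _ ≤ transProb L α v (upd L v b) := transProb_lower hα0 hα1 (mem_cube.2 hb)
    have hsub : insert y R ⊆ cube L := by
      intro z hz
      rcases Finset.mem_insert.1 hz with h | h
      · rwa [h]
      · exact (Finset.filter_subset _ _) h
    have : transProb L α v y + ∑ z ∈ R, transProb L α v z ≤ 1 := by
      rw [← Finset.sum_insert hyR]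
      calc ∑ z ∈ insert y R, transProb L α v z
          ≤ ∑ z ∈ cube L, transProb L α v z := by
            apply Finset.sum_le_sum_of_subset_of_nonneg hsub
            intro z _ _
            exact transProb_nonneg hα0 hα1 v z
        _ = 1 := row_sum hα0 hα1 hv
    linarith
  -- strict inequality gives the contradiction
  have hstrict : ∑ u ∈ R, (∑ z ∈ R, transProb L α u z) * weight L α u
      < ∑ u ∈ R, weight L α u := by
    apply Finset.sum_lt_sum
    · intro u hu
      have := weight_pos (L := L) hα0 hα1 u
      nlinarith [hle u hu, Finset.sum_nonneg (fun z (_ : z ∈ R) => transProb_nonneg hα0 hα1 u z)]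
    · refine ⟨v, hvR, ?_⟩
      have := weight_pos (L := L) hα0 hα1 v
      nlinarith [hlt]
  rw [h1, h2, Finset.sum_congr rfl (fun u _ => hform u)] at *
  exact absurd h1 (by linarith)
end Markov

section Omega
variable {L : ℕ} [NeZero L] {α : ℝ}

theorem patCount_le (v : ZMod L → ℤ) (w : List ℤ) : patCount L v w ≤ L := by
  unfold patCount
  calc _ ≤ (Finset.range L).card := Finset.card_filter_le _ _
    _ = L := Finset.card_range L
end Omega
end Stat


/-- the normalized weight is a stationary probability distribution on each
irreducible component Ω (the mutual-reachability class of a configuration x₀).  Since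
any pattern count is at most L, summing k₁, k₂ over 0,…,L covers all of ℕ. -/
theorem stationary_distribution_on_component (L : ℕ) (hL : 6 ≤ L) [NeZero L]
    (α : ℝ) (hα0 : 0 < α) (hα1 : α < 1)
    (Ω : Finset (ZMod L → ℤ)) (x₀ : ZMod L → ℤ) (hx₀ : IsBin L x₀)
    (hΩ : ∀ y, y ∈ Ω ↔ reach L x₀ y ∧ reach L y x₀)
    (Z : ℝ)
    (hZ : Z = ∑ k₁ ∈ Finset.range (L + 1), ∑ k₂ ∈ Finset.range (L + 1),
      α ^ k₂ / (1 - α) ^ (k₁ + k₂) *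
        ((Ω.filter fun y =>
            patCount L y [1, 1, 1, 0] = k₁ ∧ patCount L y [0, 1, 0] = k₂).card : ℝ)) :
    (∑ x ∈ Ω, weight L α x / Z = 1) ∧
      ∀ x ∈ Ω, ∑ x' ∈ Ω, transProb L α x' x * (weight L α x' / Z) = weight L α x / Z := by

  classical
  have hΩbin : ∀ y ∈ Ω, IsBin L y := fun y hy =>
    Stat.reach_isBin ((hΩ y).1 hy).1 hx₀
  have hΩcube : Ω ⊆ cube L := fun y hy => Stat.mem_cube.2 (hΩbin y hy)
  have hx₀Ω : x₀ ∈ Ω := (hΩ x₀).2 ⟨Stat.reach_refl x₀, Stat.reach_refl x₀⟩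
  -- Z is the partition sum
  have hZsum : Z = ∑ y ∈ Ω, weight L α y := by
    rw [hZ]
    have inner : ∀ k₁ ∈ Finset.range (L+1), ∀ k₂ ∈ Finset.range (L+1),
        α ^ k₂ / (1 - α) ^ (k₁ + k₂) *
          ((Ω.filter fun y =>
              patCount L y [1, 1, 1, 0] = k₁ ∧ patCount L y [0, 1, 0] = k₂).card : ℝ)
        = ∑ y ∈ Ω.filter (fun y =>
              patCount L y [1, 1, 1, 0] = k₁ ∧ patCount L y [0, 1, 0] = k₂),
            weight L α y := by
      intro k₁ _ k₂ _
      rw [Finset.sum_congr rfl (fun y hy => ?_), Finset.sum_const, nsmul_eq_mul, mul_comm]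
      obtain ⟨h1, h2⟩ := (Finset.mem_filter.1 hy).2
      rw [Stat.weight_eq, h1, h2]
    rw [Finset.sum_congr rfl (fun k₁ hk₁ =>
      Finset.sum_congr rfl (fun k₂ hk₂ => inner k₁ hk₁ k₂ hk₂))]
    rw [← Finset.sum_product']
    have maps : ∀ y ∈ Ω,
        (patCount L y [1, 1, 1, 0], patCount L y [0, 1, 0])
          ∈ Finset.range (L+1) ×ˢ Finset.range (L+1) := by
      intro y _
      rw [Finset.mem_product, Finset.mem_range, Finset.mem_range]
      exact ⟨Nat.lt_succ_of_le (Stat.patCount_le y _), Nat.lt_succ_of_le (Stat.patCount_le y _)⟩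
    have := Finset.sum_fiberwise_of_maps_to maps (weight L α)
    rw [← this]
    apply Finset.sum_congr rfl
    intro p _
    apply Finset.sum_congr ?_ (fun _ _ => rfl)
    apply Finset.filter_congr
    intro y _
    rw [Prod.ext_iff]
  have hZpos : 0 < Z := by
    rw [hZsum]
    exact Finset.sum_pos (fun y _ => Stat.weight_pos hα0 hα1 y) ⟨x₀, hx₀Ω⟩
  constructor
  · rw [← Finset.sum_div, ← hZsum, div_self (ne_of_gt hZpos)]
  · intro x hx
    have core : ∑ x' ∈ Ω, transProb L α x' x * weight L α x' = weight L α x := by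
      rw [Finset.sum_subset hΩcube ?_]
      · exact Stat.fullStationary hα0 hα1 (hΩbin x hx)
      · intro u hu huΩ
        have : transProb L α u x = 0 := by
          by_contra hne
          obtain ⟨b, hb, hup⟩ := Stat.transProb_step hα0 hα1 hne
          have hstep : step L u x := ⟨b, hb, hup⟩
          have hxu : reach L x u := hup ▸ Stat.reach_back hα0 hα1 (Stat.mem_cube.1 hu) hb
          have : u ∈ Ω := (hΩ u).2
            ⟨Stat.reach_trans ((hΩ x).1 hx).1 hxu,
             Stat.reach_trans (Stat.reach_step hstep) ((hΩ x).1 hx).2⟩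
          exact huΩ this
        rw [this, zero_mul]
    calc ∑ x' ∈ Ω, transProb L α x' x * (weight L α x' / Z)
        = (∑ x' ∈ Ω, transProb L α x' x * weight L α x') / Z := by
          rw [Finset.sum_div]
          exact Finset.sum_congr rfl (fun x' _ => by ring)
      _ = weight L α x / Z := by rw [core]
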